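/- arXiv:1906.02735 — 3 statements merged into one kernel-verified Lean document; each statement's English description precedes it below -/
import Mathlib

section
/- Let (Ω,P) be a probability space and (Δ_k)_{k≥0} a sequence of real-valued random variables such that E[∑_{k=0}^∞ |Δ_k|] < ∞. Let N : Ω → ℕ be a random variable, independent of the sequence (Δ_k), such that P(N ≥ k) > 0 for every k ≥ 0. Then the random variable Z = ∑_{k=0}^{N} Δ_k / P(N ≥ k) is integrable and E[Z] = E[∑_{k=0}^∞ Δ_k]; in particular, writing Y_M = ∑_{k=0}^M Δ_k, one has E[Z] = lim_{M→∞} E[Y_M]. -/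
open MeasureTheory ProbabilityTheory Filter Set

/-- Russian roulette estimator: let `(Δ_k)` be real random variables with
`E[∑_k |Δ_k|] < ∞` and let `N` be an `ℕ`-valued random variable, independent of the
sequence `(Δ_k)`, with `P(N ≥ k) > 0` for every `k`. Then
`Z = ∑_{k=0}^{N} Δ_k / P(N ≥ k)` is integrable and `E[Z] = E[∑_{k=0}^∞ Δ_k]`;
in particular, with `Y_M = ∑_{k=0}^M Δ_k`, `E[Z] = lim_{M→∞} E[Y_M]`. -/
theorem russian_roulette_unbiased {Ω : Type*} [MeasurableSpace Ω]
    (P : Measure Ω) [IsProbabilityMeasure P]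
    (Δ : ℕ → Ω → ℝ) (hΔmeas : ∀ k, Measurable (Δ k))
    (hsum : ∫⁻ ω, (∑' k : ℕ, (‖Δ k ω‖₊ : ENNReal)) ∂P < ⊤)
    (N : Ω → ℕ) (hNmeas : Measurable N)
    (hindep : IndepFun (fun ω => fun k => Δ k ω) N P)
    (hpos : ∀ k : ℕ, 0 < P {ω | k ≤ N ω}) :
    Integrable
      (fun ω => ∑ k ∈ Finset.range (N ω + 1), Δ k ω / (P {a | k ≤ N a}).toReal) P ∧
    ∫ ω, (∑ k ∈ Finset.range (N ω + 1), Δ k ω / (P {a | k ≤ N a}).toReal) ∂P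
      = ∫ ω, (∑' k : ℕ, Δ k ω) ∂P ∧
    Tendsto (fun M : ℕ => ∫ ω, (∑ k ∈ Finset.range (M + 1), Δ k ω) ∂P) atTop
      (nhds (∫ ω, (∑ k ∈ Finset.range (N ω + 1), Δ k ω / (P {a | k ≤ N a}).toReal) ∂P)) := by
  classical
  set p : ℕ → ℝ := fun k => (P {a | k ≤ N a}).toReal with hp
  have hAmeas : ∀ k : ℕ, MeasurableSet {a | k ≤ N a} := fun k => hNmeas measurableSet_Ici
  have hpfin : ∀ k : ℕ, P {a | k ≤ N a} ≠ ⊤ := fun k => measure_ne_top P _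
  have hppos : ∀ k, 0 < p k := fun k => ENNReal.toReal_pos (hpos k).ne' (hpfin k)
  set g : ℕ → Ω → ℝ := fun k => ({a | k ≤ N a}).indicator (fun a => Δ k a / p k) with hgdef
  have hgmeas : ∀ k, Measurable (g k) := fun k =>
    ((hΔmeas k).div_const _).indicator (hAmeas k)
  -- pointwise representation of Z as a tsum
  have hgval : ∀ k ω, k ≤ N ω → g k ω = Δ k ω / p k := fun k ω h =>
    indicator_of_mem (show ω ∈ {a | k ≤ N a} from h) _
  have hgzero : ∀ k ω, ¬ k ≤ N ω → g k ω = 0 := fun k ω h =>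
    indicator_of_notMem (show ω ∉ {a | k ≤ N a} from h) _
  have hZrep : ∀ ω, (∑ k ∈ Finset.range (N ω + 1), Δ k ω / p k) = ∑' k, g k ω := by
    intro ω
    rw [tsum_eq_sum (s := Finset.range (N ω + 1))
      (fun k hk => hgzero k ω (by simp only [Finset.mem_range, not_lt] at hk; omega))]
    exact Finset.sum_congr rfl fun k hk =>
      (hgval k ω (by simp only [Finset.mem_range] at hk; omega)).symm
  -- independence of Δ k and N
  have hindk : ∀ k, IndepFun (Δ k) N P := fun k =>
    hindep.comp (measurable_pi_apply k) measurable_id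
  -- lintegral computation
  have hlint : ∀ k, ∫⁻ ω, (‖g k ω‖₊ : ENNReal) ∂P = ∫⁻ ω, (‖Δ k ω‖₊ : ENNReal) ∂P := by
    intro k
    have hχ : IndepFun (fun ω => (‖Δ k ω‖₊ : ENNReal))
        (fun ω => if k ≤ N ω then (1 : ENNReal) else 0) P := by
      have := (hindk k).comp (φ := fun x : ℝ => (‖x‖₊ : ENNReal))
        (ψ := fun n : ℕ => if k ≤ n then (1 : ENNReal) else 0)
        ((measurable_nnnorm).coe_nnreal_ennreal) Measurable.of_discrete
      simpa [Function.comp_def] using this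
    have key := lintegral_mul_eq_lintegral_mul_lintegral_of_indepFun
      (f := fun ω => (‖Δ k ω‖₊ : ENNReal))
      (g := fun ω => if k ≤ N ω then (1 : ENNReal) else 0)
      ((hΔmeas k).nnnorm.coe_nnreal_ennreal)
      (Measurable.ite (hAmeas k) measurable_const measurable_const) hχ
    have hχint : ∫⁻ ω, (if k ≤ N ω then (1 : ENNReal) else 0) ∂P = P {a | k ≤ N a} := by
      have : (fun ω => if k ≤ N ω then (1 : ENNReal) else 0)
          = ({a | k ≤ N a}).indicator (fun _ => (1 : ENNReal)) := by
        funext ω; simp [indicator_apply, mem_setOf_eq]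
      rw [this, lintegral_indicator_const (hAmeas k), one_mul]
    have hptw : ∀ ω, (‖g k ω‖₊ : ENNReal)
        = ((fun ω => (‖Δ k ω‖₊ : ENNReal)) * fun ω => if k ≤ N ω then (1 : ENNReal) else 0) ω
            * ENNReal.ofReal (p k)⁻¹ := by
      intro ω
      by_cases h : k ≤ N ω
      · rw [hgval k ω h]
        simp only [Pi.mul_apply, if_pos h, mul_one]
        rw [div_eq_mul_inv, nnnorm_mul, ENNReal.coe_mul,
          (enorm_eq_nnnorm ((p k)⁻¹)).symm.trans (Real.enorm_eq_ofReal (inv_nonneg.mpr (hppos k).le))]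
      · rw [hgzero k ω h]
        simp [if_neg h]
    calc ∫⁻ ω, (‖g k ω‖₊ : ENNReal) ∂P
        = (∫⁻ ω, ((fun ω => (‖Δ k ω‖₊ : ENNReal))
            * fun ω => if k ≤ N ω then (1 : ENNReal) else 0) ω ∂P)
            * ENNReal.ofReal (p k)⁻¹ := by
          rw [← lintegral_mul_const' _ _ (by simp)]
          exact lintegral_congr hptw
      _ = (∫⁻ ω, (‖Δ k ω‖₊ : ENNReal) ∂P)
            * (P {a | k ≤ N a} * ENNReal.ofReal (p k)⁻¹) := by
          rw [key, hχint, mul_assoc]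
      _ = ∫⁻ ω, (‖Δ k ω‖₊ : ENNReal) ∂P := by
          rw [show P {a | k ≤ N a} = ENNReal.ofReal (p k) from
              (ENNReal.ofReal_toReal (hpfin k)).symm,
            ← ENNReal.ofReal_mul (hppos k).le, mul_inv_cancel₀ (hppos k).ne', ENNReal.ofReal_one,
            mul_one]
  have hne : ∑' k, ∫⁻ ω, (‖Δ k ω‖₊ : ENNReal) ∂P ≠ ⊤ := by
    rw [← lintegral_tsum fun k => ((hΔmeas k).nnnorm.coe_nnreal_ennreal).aemeasurable]
    exact hsum.ne
  have hgsum : ∑' k, ∫⁻ ω, (‖g k ω‖₊ : ENNReal) ∂P ≠ ⊤ := by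
    simp_rw [hlint]; exact hne
  have hΔint : ∀ k, Integrable (Δ k) P := by
    intro k
    refine ⟨(hΔmeas k).aestronglyMeasurable, ?_⟩
    exact lt_of_le_of_lt (lintegral_mono fun ω => ENNReal.le_tsum k) hsum
  -- measurability of Z
  have hZmeas : Measurable (fun ω => ∑ k ∈ Finset.range (N ω + 1), Δ k ω / p k) := by
    have h : Measurable (fun q : Ω × ℕ => ∑ k ∈ Finset.range (q.2 + 1), Δ k q.1 / p k) :=
      measurable_from_prod_countable_left fun n => by
        exact Finset.measurable_sum (Finset.range (n + 1))
          fun k _ => (hΔmeas k).div_const (p k)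
    exact h.comp (measurable_id.prodMk hNmeas)
  -- integrability of Z
  have hZint : Integrable (fun ω => ∑ k ∈ Finset.range (N ω + 1), Δ k ω / p k) P := by
    refine ⟨hZmeas.aestronglyMeasurable, ?_⟩
    have hbound : ∀ ω, (‖∑ k ∈ Finset.range (N ω + 1), Δ k ω / p k‖₊ : ENNReal)
        ≤ ∑' k, (‖g k ω‖₊ : ENNReal) := by
      intro ω
      calc (‖∑ k ∈ Finset.range (N ω + 1), Δ k ω / p k‖₊ : ENNReal)
          ≤ ∑ k ∈ Finset.range (N ω + 1), (‖Δ k ω / p k‖₊ : ENNReal) := by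
            rw [← ENNReal.coe_finset_sum]
            exact_mod_cast nnnorm_sum_le _ _
        _ = ∑ k ∈ Finset.range (N ω + 1), (‖g k ω‖₊ : ENNReal) := by
            refine Finset.sum_congr rfl fun k hk => ?_
            simp only [Finset.mem_range] at hk
            rw [hgval k ω (by omega)]
        _ ≤ ∑' k, (‖g k ω‖₊ : ENNReal) := ENNReal.sum_le_tsum _
    calc ∫⁻ ω, (‖∑ k ∈ Finset.range (N ω + 1), Δ k ω / p k‖₊ : ENNReal) ∂P
        ≤ ∫⁻ ω, ∑' k, (‖g k ω‖₊ : ENNReal) ∂P := lintegral_mono hbound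
      _ = ∑' k, ∫⁻ ω, (‖g k ω‖₊ : ENNReal) ∂P :=
          lintegral_tsum fun k => ((hgmeas k).nnnorm.coe_nnreal_ennreal).aemeasurable
      _ < ⊤ := hgsum.lt_top
  -- integral of g k equals integral of Δ k
  have hgint : ∀ k, ∫ ω, g k ω ∂P = ∫ ω, Δ k ω ∂P := by
    intro k
    have hχind : IndepFun (Δ k) (fun ω => if k ≤ N ω then (1 : ℝ) else 0) P := by
      have := (hindk k).comp (φ := fun x : ℝ => x)
        (ψ := fun n : ℕ => if k ≤ n then (1 : ℝ) else 0)
        measurable_id Measurable.of_discrete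
      simpa [Function.comp_def] using this
    have hχmeas : Measurable (fun ω => if k ≤ N ω then (1 : ℝ) else 0) :=
      Measurable.ite (hAmeas k) measurable_const measurable_const
    have hχi : Integrable (fun ω => if k ≤ N ω then (1 : ℝ) else 0) P := by
      have h1 : (fun ω => if k ≤ N ω then (1 : ℝ) else 0)
          = ({a | k ≤ N a}).indicator (fun _ => (1 : ℝ)) := by
        funext ω; simp [indicator_apply, mem_setOf_eq]
      rw [h1]
      exact (integrable_const (1 : ℝ)).indicator (hAmeas k)
    have hmul := hχind.integral_mul_eq_mul_integral (hΔint k).aestronglyMeasurable hχi.aestronglyMeasurable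
    have hχval : ∫ ω, (if k ≤ N ω then (1 : ℝ) else 0) ∂P = p k := by
      have h1 : (fun ω => if k ≤ N ω then (1 : ℝ) else 0)
          = ({a | k ≤ N a}).indicator (fun _ => (1 : ℝ)) := by
        funext ω; simp [indicator_apply, mem_setOf_eq]
      rw [h1, integral_indicator_const (1 : ℝ) (hAmeas k), smul_eq_mul, mul_one]; rfl
    have hgrw : (fun ω => g k ω)
        = fun ω => (Δ k ω * (if k ≤ N ω then (1 : ℝ) else 0)) / p k := by
      funext ω
      by_cases h : k ≤ N ω
      · rw [hgval k ω h]; simp [if_pos h]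
      · rw [hgzero k ω h]; simp [if_neg h]
    rw [hgrw]
    rw [integral_div]
    rw [show (∫ a, Δ k a * (if k ≤ N a then (1 : ℝ) else 0) ∂P)
        = (∫ ω, Δ k ω ∂P) * ∫ ω, (if k ≤ N ω then (1 : ℝ) else 0) ∂P from hmul,
      hχval, mul_div_assoc, div_self (hppos k).ne', mul_one]
  -- main integral identity
  have hZeq : ∫ ω, (∑ k ∈ Finset.range (N ω + 1), Δ k ω / p k) ∂P
      = ∑' k, ∫ ω, Δ k ω ∂P := by
    have : ∫ ω, (∑ k ∈ Finset.range (N ω + 1), Δ k ω / p k) ∂P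
        = ∫ ω, ∑' k, g k ω ∂P := integral_congr_ae (Eventually.of_forall hZrep)
    rw [this, integral_tsum (fun k => (hgmeas k).aestronglyMeasurable) hgsum]
    exact tsum_congr hgint
  have hRHS : ∫ ω, (∑' k, Δ k ω) ∂P = ∑' k, ∫ ω, Δ k ω ∂P :=
    integral_tsum (fun k => (hΔmeas k).aestronglyMeasurable) hne
  refine ⟨hZint, by rw [hZeq, hRHS], ?_⟩
  -- the limit statement
  have hS : Summable (fun k => ∫ ω, Δ k ω ∂P) := by
    refine Summable.of_norm_bounded (g := fun k => (∫⁻ ω, (‖Δ k ω‖₊ : ENNReal) ∂P).toReal)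
      (ENNReal.summable_toReal hne) fun k => ?_
    calc ‖∫ ω, Δ k ω ∂P‖ ≤ ∫ ω, ‖Δ k ω‖ ∂P := norm_integral_le_integral_norm _
      _ = (∫⁻ ω, (‖Δ k ω‖₊ : ENNReal) ∂P).toReal :=
          integral_norm_eq_lintegral_enorm (hΔmeas k).aestronglyMeasurable
  have htend : Tendsto (fun M : ℕ => ∑ k ∈ Finset.range (M + 1), ∫ ω, Δ k ω ∂P) atTop
      (nhds (∑' k, ∫ ω, Δ k ω ∂P)) :=
    (hS.hasSum.tendsto_sum_nat).comp (tendsto_add_atTop_nat 1)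
  have heq : ∀ M : ℕ, ∫ ω, (∑ k ∈ Finset.range (M + 1), Δ k ω) ∂P
      = ∑ k ∈ Finset.range (M + 1), ∫ ω, Δ k ω ∂P := fun M =>
    integral_finset_sum _ fun k _ => hΔint k
  rw [hZeq]
  simpa only [heq] using htend
end

section
/- Let σ(u) = 1/(1 + e^{−u}). For every β > 0, the function LipSwish_β(z) = z·σ(βz)/1.1 is Lipschitz on ℝ with Lipschitz constant at most 1, i.e. |LipSwish_β(z₁) − LipSwish_β(z₂)| ≤ |z₁ − z₂| for all z₁, z₂ ∈ ℝ. -/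
/-- The logistic sigmoid `σ(u) = 1/(1 + e^{-u})`. -/
noncomputable def logisticSigmoid (u : ℝ) : ℝ := (1 + Real.exp (-u))⁻¹

/-- `e^{2.4} ≥ 11`. -/
lemma lipswish_exp24 : (11:ℝ) ≤ Real.exp 2.4 := by
  have h1 : (2.7182818283:ℝ) < Real.exp 1 := Real.exp_one_gt_d9
  have h5 : Real.exp 2.4 ^ 5 = Real.exp 1 ^ 12 := by
    rw [← Real.exp_nat_mul, ← Real.exp_nat_mul]; norm_num
  have h2 : (11:ℝ)^5 ≤ Real.exp 2.4 ^ 5 := by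
    rw [h5]
    calc (11:ℝ)^5 ≤ (2.7182818283:ℝ)^12 := by norm_num
      _ ≤ Real.exp 1 ^ 12 := pow_le_pow_left₀ (by norm_num) h1.le _
  exact le_of_pow_le_pow_left₀ (by norm_num) (Real.exp_pos _).le h2

/-- The key inequality: `u ≤ 0.1 e^u + 1.2 + 1.1 e^{-u}` for all real `u`. -/
lemma lipswish_key (u : ℝ) : u ≤ 0.1 * Real.exp u + 1.2 + 1.1 * Real.exp (-u) := by
  have hlog : Real.log 11 ≤ 2.4 := by
    rw [Real.log_le_iff_le_exp (by norm_num)]; exact lipswish_exp24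
  set v := u - Real.log 11 with hv
  have e1 : Real.exp u = 11 * Real.exp v := by
    rw [show u = Real.log 11 + v by rw [hv]; ring, Real.exp_add, Real.exp_log (by norm_num)]
  have e2 : Real.exp (-u) = (1/11) * Real.exp (-v) := by
    rw [show -u = -Real.log 11 + -v by rw [hv]; ring, Real.exp_add, Real.exp_neg,
      Real.exp_log (by norm_num)]
    ring
  have b1 : 1 + v ≤ Real.exp v := by linarith [Real.add_one_le_exp v]
  have b2 : 1 - v ≤ Real.exp (-v) := by linarith [Real.add_one_le_exp (-v)]
  rw [e1, e2]
  nlinarith [b1, b2]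

/-- The swish derivative `σ(u) + u σ'(u)` is bounded by `1.1` in absolute value. -/
lemma lipswish_deriv_bound (u : ℝ) :
    |(1 + Real.exp (-u))⁻¹ + u * Real.exp (-u) / (1 + Real.exp (-u))^2| ≤ 1.1 := by
  set t := Real.exp (-u) with htdef
  have ht : 0 < t := Real.exp_pos _
  have hu : 0 < Real.exp u := Real.exp_pos _
  have hmul : Real.exp u * t = 1 := by
    rw [htdef, ← Real.exp_add]; simp
  have hA : (0:ℝ) < 1 + t := by positivity
  have k1 := lipswish_key u
  have k2 := lipswish_key (-u)
  rw [neg_neg] at k2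
  have e : (1+t)⁻¹ + u*t/(1+t)^2 = ((1+t) + u*t)/(1+t)^2 := by
    field_simp
  rw [e, abs_div, abs_of_pos (pow_pos hA 2), div_le_iff₀ (pow_pos hA 2), abs_le]
  constructor
  · nlinarith [mul_le_mul_of_nonneg_right k2 ht.le, hmul, ht]
  · nlinarith [mul_le_mul_of_nonneg_right k1 ht.le, hmul, ht]

lemma lipswish_hasDerivAt (β z : ℝ) :
    HasDerivAt (fun z => z * logisticSigmoid (β * z) / 1.1)
      ((logisticSigmoid (β * z)
        + z * (β * Real.exp (-(β * z)) / (1 + Real.exp (-(β * z)))^2)) / 1.1) z := by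
  have hne : (1 + Real.exp (-(β * z))) ≠ 0 := by positivity
  have h1 : HasDerivAt (fun z : ℝ => β * z) β z := by
    simpa using (hasDerivAt_id z).const_mul β
  have h2 : HasDerivAt (fun w : ℝ => 1 + Real.exp (-w)) (-Real.exp (-(β * z))) (β * z) := by
    have := ((hasDerivAt_neg (β * z)).exp).const_add 1
    simpa using this
  have h3 : HasDerivAt logisticSigmoid
      (Real.exp (-(β * z)) / (1 + Real.exp (-(β * z)))^2) (β * z) := by
    have : HasDerivAt (fun w => (1 + Real.exp (-w))⁻¹)
        (- -Real.exp (-(β * z)) / (1 + Real.exp (-(β * z))) ^ 2) (β * z) := h2.inv hne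
    unfold logisticSigmoid
    convert this using 1
    ring
  have h4 : HasDerivAt (fun z => logisticSigmoid (β * z))
      (Real.exp (-(β * z)) / (1 + Real.exp (-(β * z)))^2 * β) z := h3.comp z h1
  have h5 : HasDerivAt (fun x => x * logisticSigmoid (β * x) / 1.1)
      ((1 * logisticSigmoid (β * z) + id z * (Real.exp (-(β * z)) / (1 + Real.exp (-(β * z))) ^ 2 * β)) / 1.1) z :=
    ((hasDerivAt_id z).mul h4).div_const 1.1
  convert h5 using 1
  simp only [id_eq, one_mul]
  unfold logisticSigmoid
  ring

/-- For every `β > 0`, the function `LipSwish_β(z) = z σ(βz)/1.1` is Lipschitz on `ℝ`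
with constant at most `1`. -/
theorem lipswish_lipschitz (β : ℝ) (hβ : 0 < β) (z₁ z₂ : ℝ) :
    |z₁ * logisticSigmoid (β * z₁) / 1.1 - z₂ * logisticSigmoid (β * z₂) / 1.1|
      ≤ |z₁ - z₂| := by
  have key : ∀ z : ℝ, |(logisticSigmoid (β * z)
        + z * (β * Real.exp (-(β * z)) / (1 + Real.exp (-(β * z)))^2)) / 1.1| ≤ 1 := by
    intro z
    have hb := lipswish_deriv_bound (β * z)
    have hz : z * (β * Real.exp (-(β * z)) / (1 + Real.exp (-(β * z)))^2)
        = (β * z) * Real.exp (-(β * z)) / (1 + Real.exp (-(β * z)))^2 := by ring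
    rw [abs_div]
    rw [hz]
    unfold logisticSigmoid
    rw [show |(1.1:ℝ)| = 1.1 by norm_num, div_le_one (by norm_num)]
    exact hb
  have H := convex_univ.norm_image_sub_le_of_norm_hasDerivWithin_le
    (f := fun z => z * logisticSigmoid (β * z) / 1.1)
    (f' := fun z => (logisticSigmoid (β * z)
        + z * (β * Real.exp (-(β * z)) / (1 + Real.exp (-(β * z)))^2)) / 1.1)
    (C := 1)
    (fun x _ => (lipswish_hasDerivAt β x).hasDerivWithinAt)
    (fun x _ => by rw [Real.norm_eq_abs]; exact key x)
    (Set.mem_univ z₂) (Set.mem_univ z₁)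
  simpa [Real.norm_eq_abs] using H
end

section
/- Let g : ℝ^d → ℝ^d be continuously differentiable with Lip(g) < 1 and set f(x) = x + g(x). Then f is a C¹ diffeomorphism of ℝ^d; for every x, det(I + Dg(x)) > 0; and for every measurable function p : ℝ^d → [0, ∞], the pushforward under f⁻¹ of the measure with Lebesgue density p equals the measure with Lebesgue density x ↦ p(f(x)) · det(I + Dg(x)). -/
open MeasureTheory

/-- The Jacobian matrix of `g : ℝ^d → ℝ^d` at `x`: entry `(i, j)` is `∂gᵢ/∂xⱼ (x)`. -/
noncomputable def jacobianMatrix {d : ℕ}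
    (g : EuclideanSpace ℝ (Fin d) → EuclideanSpace ℝ (Fin d))
    (x : EuclideanSpace ℝ (Fin d)) : Matrix (Fin d) (Fin d) ℝ :=
  Matrix.of fun i j => fderiv ℝ g x (EuclideanSpace.single j 1) i

/-- Change of variables for invertible residual maps: if `g` is `C¹` with `Lip(g) < 1`
and `f(x) = x + g(x)`, then `f` is a `C¹` diffeomorphism of `ℝ^d`, `det(I + Dg(x)) > 0`
for every `x`, and for every measurable `p : ℝ^d → [0,∞]` the pushforward under `f⁻¹`
of the measure with Lebesgue density `p` has Lebesgue density
`x ↦ p(f(x)) · det(I + Dg(x))`. -/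
theorem residual_block_change_of_variables {d : ℕ}
    (g : EuclideanSpace ℝ (Fin d) → EuclideanSpace ℝ (Fin d))
    (L : NNReal) (hL : L < 1) (hg : LipschitzWith L g) (hsmooth : ContDiff ℝ 1 g) :
    Function.Bijective (fun x => x + g x) ∧
    ContDiff ℝ 1 (fun x => x + g x) ∧
    ContDiff ℝ 1 (Function.invFun (fun x => x + g x)) ∧
    (∀ x, 0 < (1 + jacobianMatrix g x).det) ∧
    ∀ p : EuclideanSpace ℝ (Fin d) → ENNReal, Measurable p →
      Measure.map (Function.invFun (fun x => x + g x)) (volume.withDensity p)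
        = volume.withDensity
            (fun x => p (x + g x) * ENNReal.ofReal ((1 + jacobianMatrix g x).det)) := by
  classical
  set f : EuclideanSpace ℝ (Fin d) → EuclideanSpace ℝ (Fin d) := fun x => x + g x with hf_def
  have hgdiff : Differentiable ℝ g := hsmooth.differentiable one_ne_zero
  have hDg : ∀ x, HasFDerivAt g (fderiv ℝ g x) x := fun x => (hgdiff x).hasFDerivAt
  have hnorm : ∀ x, ‖fderiv ℝ g x‖ ≤ L := fun x => (hDg x).le_of_lipschitz hg
  have hnorm' : ∀ (t : ℝ) (x : EuclideanSpace ℝ (Fin d)), |t| ≤ 1 →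
      ‖-(t • fderiv ℝ g x)‖ < 1 := by
    intro t x ht
    rw [norm_neg, norm_smul, Real.norm_eq_abs]
    calc |t| * ‖fderiv ℝ g x‖ ≤ 1 * (L : ℝ) :=
          mul_le_mul ht (hnorm x) (norm_nonneg _) zero_le_one
      _ < 1 := by rw [one_mul]; exact_mod_cast hL
  set u : ℝ → EuclideanSpace ℝ (Fin d) →
      (EuclideanSpace ℝ (Fin d) →L[ℝ] EuclideanSpace ℝ (Fin d))ˣ := fun t x =>
    if h : |t| ≤ 1 then Units.oneSub (-(t • fderiv ℝ g x)) (hnorm' t x h) else 1 with hu_def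
  have hu_val : ∀ (t : ℝ) (x : EuclideanSpace ℝ (Fin d)), |t| ≤ 1 →
      ((u t x : EuclideanSpace ℝ (Fin d) →L[ℝ] EuclideanSpace ℝ (Fin d)))
        = 1 + t • fderiv ℝ g x := by
    intro t x ht
    simp only [hu_def, dif_pos ht, Units.val_oneSub, sub_neg_eq_add]
  set e : EuclideanSpace ℝ (Fin d) →
      (EuclideanSpace ℝ (Fin d) ≃L[ℝ] EuclideanSpace ℝ (Fin d)) := fun x =>
    ContinuousLinearEquiv.unitsEquiv ℝ (EuclideanSpace ℝ (Fin d)) (u 1 x) with he_def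
  have he_coe : ∀ x, ((e x) : EuclideanSpace ℝ (Fin d) →L[ℝ] EuclideanSpace ℝ (Fin d))
      = 1 + fderiv ℝ g x := by
    intro x
    refine ContinuousLinearMap.ext fun v => ?_
    have h := ContinuousLinearMap.ext_iff.1 (hu_val 1 x (by norm_num)) v
    simpa [one_smul, he_def, ContinuousLinearEquiv.unitsEquiv_apply] using h
  -- derivative of f
  have hf' : ∀ x, HasFDerivAt f
      ((e x : EuclideanSpace ℝ (Fin d) →L[ℝ] EuclideanSpace ℝ (Fin d))) x := by
    intro x
    rw [he_coe]
    have h1 := (hasFDerivAt_id (𝕜 := ℝ) x).add (hDg x)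
    rwa [← ContinuousLinearMap.one_def] at h1
  -- injectivity
  have hinj : Function.Injective f := by
    intro a b hab
    have hab' : a + g a = b + g b := hab
    have h2 : g b - g a = a - b := by
      rw [sub_eq_sub_iff_add_eq_add, add_comm (g b) b]
      exact hab'.symm
    have h1 : ‖a - b‖ ≤ L * ‖a - b‖ := by
      have h := hg.dist_le_mul b a
      rw [dist_eq_norm, dist_eq_norm, h2, norm_sub_rev b a] at h
      exact h
    have hL1 : (L : ℝ) < 1 := hL
    have h0 : ‖a - b‖ = 0 := by nlinarith [norm_nonneg (a - b)]
    exact sub_eq_zero.1 (norm_eq_zero.1 h0)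
  -- surjectivity
  have hsurj : Function.Surjective f := by
    intro y
    have hlip : LipschitzWith L (fun x => y - g x) := by
      apply LipschitzWith.of_dist_le_mul
      intro a b
      rw [dist_sub_left]
      exact hg.dist_le_mul a b
    have hc : ContractingWith L (fun x => y - g x) := ⟨hL, hlip⟩
    obtain ⟨x, hx, -⟩ := hc.exists_fixedPoint y (edist_ne_top _ _)
    refine ⟨x, ?_⟩
    have hfix : y - g x = x := hx
    exact (sub_eq_iff_eq_add.1 hfix).symm
  have hbij : Function.Bijective f := ⟨hinj, hsurj⟩
  have hfC1 : ContDiff ℝ 1 f := contDiff_id.add hsmooth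
  -- matrix identity
  set b := (EuclideanSpace.basisFun (Fin d) ℝ).toBasis with hb_def
  have hmat : ∀ (t : ℝ) (x : EuclideanSpace ℝ (Fin d)),
      LinearMap.toMatrix b b
        ((1 + t • fderiv ℝ g x : EuclideanSpace ℝ (Fin d) →L[ℝ] EuclideanSpace ℝ (Fin d))
          : EuclideanSpace ℝ (Fin d) →ₗ[ℝ] EuclideanSpace ℝ (Fin d))
        = 1 + t • jacobianMatrix g x := by
    intro t x
    ext i j
    rw [LinearMap.toMatrix_apply]
    have hbj : b j = EuclideanSpace.single j 1 := by
      rw [hb_def, OrthonormalBasis.coe_toBasis, EuclideanSpace.basisFun_apply]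
    rw [hbj, hb_def, OrthonormalBasis.coe_toBasis_repr_apply, EuclideanSpace.basisFun_repr]
    simp only [ContinuousLinearMap.coe_coe, ContinuousLinearMap.add_apply,
      ContinuousLinearMap.one_apply, ContinuousLinearMap.smul_apply]
    have h2 : ((1 : Matrix (Fin d) (Fin d) ℝ) + t • jacobianMatrix g x) i j
        = (if i = j then (1:ℝ) else 0) + t * jacobianMatrix g x i j := by
      simp [Matrix.one_apply]
    rw [h2]
    simp only [PiLp.add_apply, PiLp.smul_apply, smul_eq_mul]
    have h1 : (EuclideanSpace.single j 1 : EuclideanSpace ℝ (Fin d)) i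
        = if i = j then (1:ℝ) else 0 := by
      simp [EuclideanSpace.single_apply]
    rw [h1]
    rfl
  have hdet_eq : ∀ (t : ℝ) (x : EuclideanSpace ℝ (Fin d)),
      (1 + t • jacobianMatrix g x).det
        = LinearMap.det
            ((1 + t • fderiv ℝ g x : EuclideanSpace ℝ (Fin d) →L[ℝ] EuclideanSpace ℝ (Fin d))
              : EuclideanSpace ℝ (Fin d) →ₗ[ℝ] EuclideanSpace ℝ (Fin d)) := by
    intro t x
    rw [← hmat t x, LinearMap.det_toMatrix]
  have hdet_ne : ∀ (t : ℝ) (x : EuclideanSpace ℝ (Fin d)), |t| ≤ 1 →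
      (1 + t • jacobianMatrix g x).det ≠ 0 := by
    intro t x ht
    rw [hdet_eq t x, ← hu_val t x ht]
    have hcoe : ((u t x : EuclideanSpace ℝ (Fin d) →L[ℝ] EuclideanSpace ℝ (Fin d)))
        = ((ContinuousLinearEquiv.unitsEquiv ℝ (EuclideanSpace ℝ (Fin d)) (u t x))
            : EuclideanSpace ℝ (Fin d) →L[ℝ] EuclideanSpace ℝ (Fin d)) :=
      ContinuousLinearMap.ext fun v =>
        (ContinuousLinearEquiv.unitsEquiv_apply ℝ _ (u t x) v).symm
    rw [hcoe]
    exact IsUnit.ne_zero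
      ((ContinuousLinearEquiv.unitsEquiv ℝ (EuclideanSpace ℝ (Fin d))
        (u t x)).toLinearEquiv).isUnit_det'
  -- positivity of determinant
  have hdet_pos : ∀ x, 0 < (1 + jacobianMatrix g x).det := by
    intro x
    set h : ℝ → ℝ := fun t => (1 + t • jacobianMatrix g x).det with hh_def
    have hcont : Continuous h := by
      apply Continuous.matrix_det
      exact continuous_const.add (continuous_id.smul continuous_const)
    have h0 : h 0 = 1 := by simp [hh_def]
    have hne : ∀ t ∈ Set.Icc (0:ℝ) 1, h t ≠ 0 := fun t ht =>
      hdet_ne t x (abs_le.2 ⟨le_trans (by norm_num) ht.1, ht.2⟩)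
    by_contra hle
    push_neg at hle
    have h1le : h 1 ≤ 0 := by simpa [hh_def, one_smul] using hle
    have h1lt : h 1 < 0 := lt_of_le_of_ne h1le (hne 1 (by norm_num))
    have hmem : (0:ℝ) ∈ Set.Icc (h 1) (h 0) := ⟨le_of_lt h1lt, by rw [h0]; norm_num⟩
    obtain ⟨t, ht, htz⟩ :=
      intermediate_value_Icc' (by norm_num : (0:ℝ) ≤ 1) hcont.continuousOn hmem
    exact hne t ht htz
  have hrightInv : Function.RightInverse (Function.invFun f) f :=
    Function.rightInverse_invFun hsurj
  have hleftInv : Function.LeftInverse (Function.invFun f) f :=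
    Function.leftInverse_invFun hinj
  -- smoothness of the inverse
  have hinvC1 : ContDiff ℝ 1 (Function.invFun f) := by
    rw [contDiff_iff_contDiffAt]
    intro y
    set x := Function.invFun f y with hx_def
    have hfx : f x = y := hrightInv y
    have hca : ContDiffAt ℝ 1 f x := hfC1.contDiffAt
    have hstrict := hca.hasStrictFDerivAt' (f' := e x) (hf' x) one_ne_zero
    have H : ContDiffAt ℝ 1 (hca.localInverse (f' := e x) (hf' x) one_ne_zero) (f x) :=
      hca.to_localInverse (f' := e x) (hf' x) one_ne_zero
    rw [hfx] at H
    apply H.congr_of_eventuallyEq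
    have hev : ∀ᶠ z in nhds (f x), f (hstrict.localInverse f (e x) x z) = z :=
      hstrict.eventually_right_inverse
    rw [hfx] at hev
    filter_upwards [hev] with z hz
    exact hinj (by rw [hrightInv z]; exact hz.symm)
  refine ⟨hbij, hfC1, hinvC1, hdet_pos, ?_⟩
  -- change of variables
  intro p hp
  have hinv_meas : Measurable (Function.invFun f) := hinvC1.continuous.measurable
  ext s hs
  rw [Measure.map_apply hinv_meas hs]
  have himg : f '' s = Function.invFun f ⁻¹' s :=
    congrFun (Set.image_eq_preimage_of_inverse hleftInv hrightInv) s
  have himg_meas : MeasurableSet (f '' s) := by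
    rw [himg]; exact hinv_meas hs
  rw [← himg, withDensity_apply _ himg_meas, withDensity_apply _ hs]
  have hfd : ∀ x ∈ s, HasFDerivWithinAt f
      ((e x : EuclideanSpace ℝ (Fin d) →L[ℝ] EuclideanSpace ℝ (Fin d))) s x :=
    fun x _ => (hf' x).hasFDerivWithinAt
  rw [lintegral_image_eq_lintegral_abs_det_fderiv_mul volume hs hfd hinj.injOn p]
  apply setLIntegral_congr_fun hs
  unfold Set.EqOn
  intro x _
  have hdet1 : ((e x : EuclideanSpace ℝ (Fin d) →L[ℝ] EuclideanSpace ℝ (Fin d))).det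
      = (1 + jacobianMatrix g x).det := by
    have h := hdet_eq 1 x
    rw [one_smul, one_smul] at h
    rw [h, ← he_coe x]
  beta_reduce
  rw [hdet1, abs_of_pos (hdet_pos x), mul_comm]
end
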